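/- Let n ≥ 2 and N ≥ 1 be integers, A = (a_{ij})_{1≤i,j≤n-1} ∈ M_{n-1}(ℂ), and η_{(1)}, η_{(2)} ∈ (ℂ∖{0})^n with D_i = diag(η_{0i},…,η_{n-1,i}) for i = 1,2. Suppose the orthogonality relation ∑_{x∈X(n,N)} binom(N,x) (∏_{i=0}^{n-1} η_{i1}^{x_i}) φ_A(x;m) conj(φ_A(x;m')) = δ_{m,m'} (∏_{i=0}^{n-1} η_{i2}^{m_i}) / binom(N,m) holds for all m, m' ∈ X(n,N). Then there exists a complex number ζ with ζ^N = 1 such that A₀* D₁ A₀ = ζ D₂, where A₀* is the conjugate transpose of A₀. -/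
import Mathlib
open Finset MvPolynomial

/-- `X(n,N)`: the set of tuples in `ℕ₀ⁿ` with coordinate sum `N`,
as a `Finset` of functions `Fin n → ℕ`. -/
def XSet (n N : ℕ) : Finset (Fin n → ℕ) :=
  (Fintype.piFinset fun _ : Fin n => Finset.range (N + 1)).filter fun x => ∑ i, x i = N

lemma XSet_eq_piAntidiag (n N : ℕ) : XSet n N = Finset.piAntidiag Finset.univ N := by
  ext x
  simp only [XSet, Finset.mem_filter, Fintype.mem_piFinset, Finset.mem_range,
    Finset.mem_piAntidiag, Finset.mem_univ, implies_true, and_true, ne_eq]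
  constructor
  · rintro ⟨-, h⟩; exact h
  · intro h
    refine ⟨fun i => ?_, h⟩
    have : x i ≤ ∑ j, x j := Finset.single_le_sum (fun j _ => Nat.zero_le _) (Finset.mem_univ i)
    rw [h] at this; omega

lemma sumXSet (n N : ℕ) (c : Fin n → ℂ) :
    ∑ x ∈ XSet n N, (Nat.multinomial Finset.univ x : ℂ) * ∏ i, c i ^ x i = (∑ i, c i) ^ N := by
  rw [XSet_eq_piAntidiag, Finset.sum_pow_eq_sum_piAntidiag]

/-- The multivariate Krawtchouk polynomial `φ_A(x;m)` associated to the bordered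
matrix `A₀` (whose row `0` and column `0` consist of ones): it is the coefficient of
`t^m` in the generating function `∏ᵢ (∑ⱼ (A₀)ᵢⱼ tⱼ)^{xᵢ}`, divided by the multinomial
coefficient `binom(N, m) = (∑ mᵢ)! / ∏ mᵢ!`. -/
noncomputable def phi {n : ℕ} (A0 : Matrix (Fin n) (Fin n) ℂ) (x m : Fin n → ℕ) : ℂ :=
  MvPolynomial.coeff (Finsupp.equivFunOnFinite.symm m)
      (∏ i, (∑ j, MvPolynomial.C (A0 i j) * MvPolynomial.X j) ^ x i)
    / (Nat.multinomial Finset.univ m : ℂ)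

lemma mult_ne_zero {n : ℕ} (m : Fin n → ℕ) : (Nat.multinomial Finset.univ m : ℂ) ≠ 0 := by
  exact_mod_cast (Nat.multinomial_pos _ _).ne'

lemma phi_gen {n N : ℕ} (A0 : Matrix (Fin n) (Fin n) ℂ) (x : Fin n → ℕ) (hx : ∑ i, x i = N)
    (t : Fin n → ℂ) :
    ∑ m ∈ XSet n N, (Nat.multinomial Finset.univ m : ℂ) * phi A0 x m * ∏ l, t l ^ m l
      = ∏ i, (∑ l, A0 i l * t l) ^ x i := by
  set P : MvPolynomial (Fin n) ℂ := ∏ i, (∑ j, MvPolynomial.C (A0 i j) * MvPolynomial.X j) ^ x i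
    with hPdef
  have hP : P.IsHomogeneous N := by
    rw [← hx]
    refine MvPolynomial.IsHomogeneous.prod Finset.univ _ x fun i _ => ?_
    have h1 : (∑ j, MvPolynomial.C (A0 i j) * MvPolynomial.X j : MvPolynomial (Fin n) ℂ).IsHomogeneous 1 :=
      MvPolynomial.IsHomogeneous.sum _ _ _ fun j _ => MvPolynomial.isHomogeneous_C_mul_X _ _
    simpa using h1.pow (x i)
  have hsupp : P.support ⊆ (XSet n N).map (Finsupp.equivFunOnFinite.symm.toEmbedding) := by
    intro d hd
    have hdeg : d.degree = N := by
      rw [Finsupp.degree_eq_weight_one]; exact hP (MvPolynomial.mem_support_iff.mp hd)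
    rw [Finset.mem_map]
    refine ⟨Finsupp.equivFunOnFinite d, ?_, by simp⟩
    rw [XSet_eq_piAntidiag, Finset.mem_piAntidiag]
    refine ⟨?_, by simp⟩
    rw [← hdeg, Finsupp.degree]
    exact (Finset.sum_subset (Finset.subset_univ _)
      (fun i _ hi => Finsupp.notMem_support_iff.mp hi)).symm
  calc ∑ m ∈ XSet n N, (Nat.multinomial Finset.univ m : ℂ) * phi A0 x m * ∏ l, t l ^ m l
      = ∑ m ∈ XSet n N,
          MvPolynomial.coeff (Finsupp.equivFunOnFinite.symm m) P * ∏ l, t l ^ m l := by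
        refine Finset.sum_congr rfl fun m _ => ?_
        rw [phi]; rw [← hPdef]; field_simp [mult_ne_zero m]
    _ = ∑ d ∈ (XSet n N).map (Finsupp.equivFunOnFinite.symm.toEmbedding),
          MvPolynomial.coeff d P * ∏ l, t l ^ d l := by
        rw [Finset.sum_map]; rfl
    _ = ∑ d ∈ P.support, MvPolynomial.coeff d P * ∏ l, t l ^ d l := by
        refine (Finset.sum_subset hsupp fun d _ hd => ?_).symm
        rw [MvPolynomial.notMem_support_iff.mp hd, zero_mul]
    _ = MvPolynomial.eval t P := (MvPolynomial.eval_eq' t P).symm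
    _ = ∏ i, (∑ l, A0 i l * t l) ^ x i := by
        simp [hPdef]

lemma sum_XSet_eq {n N : ℕ} {x : Fin n → ℕ} (hx : x ∈ XSet n N) : ∑ i, x i = N :=
  (Finset.mem_filter.mp hx).2

lemma conj_phi {n : ℕ} (A0 : Matrix (Fin n) (Fin n) ℂ) (x m : Fin n → ℕ) :
    (starRingEnd ℂ) (phi A0 x m)
      = phi (Matrix.of fun i j => (starRingEnd ℂ) (A0 i j)) x m := by
  rw [phi, phi, map_div₀, map_natCast]
  congr 1
  rw [← MvPolynomial.coeff_map]
  congr 1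
  simp only [map_prod, map_pow, map_sum, map_mul, MvPolynomial.map_C, MvPolynomial.map_X,
    Matrix.of_apply]

lemma master {n N : ℕ} (A0 : Matrix (Fin n) (Fin n) ℂ) (η1 η2 : Fin n → ℂ)
    (horth : ∀ m ∈ XSet n N, ∀ m' ∈ XSet n N,
      ∑ x ∈ XSet n N,
          (Nat.multinomial Finset.univ x : ℂ) * (∏ i, η1 i ^ x i) *
            phi A0 x m * (starRingEnd ℂ) (phi A0 x m')
        = if m = m' then (∏ i, η2 i ^ m i) / (Nat.multinomial Finset.univ m : ℂ)
          else 0)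
    (t s : Fin n → ℂ) :
    (∑ i, η1 i * ((∑ l, A0 i l * t l) * (∑ l, (starRingEnd ℂ) (A0 i l) * s l))) ^ N
      = (∑ l, η2 l * (t l * s l)) ^ N := by
  classical
  calc (∑ i, η1 i * ((∑ l, A0 i l * t l) * (∑ l, (starRingEnd ℂ) (A0 i l) * s l))) ^ N
      = ∑ x ∈ XSet n N, (Nat.multinomial Finset.univ x : ℂ) *
          ∏ i, (η1 i * ((∑ l, A0 i l * t l) * (∑ l, (starRingEnd ℂ) (A0 i l) * s l))) ^ x i :=
        (sumXSet n N _).symm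
    _ = ∑ x ∈ XSet n N, ∑ m ∈ XSet n N, ∑ m' ∈ XSet n N,
          ((Nat.multinomial Finset.univ m : ℂ) * ∏ l, t l ^ m l) *
            (((Nat.multinomial Finset.univ m' : ℂ) * ∏ l, s l ^ m' l) *
              ((Nat.multinomial Finset.univ x : ℂ) * (∏ i, η1 i ^ x i) *
                phi A0 x m * (starRingEnd ℂ) (phi A0 x m'))) := by
        refine Finset.sum_congr rfl fun x hx => ?_
        have hxs := sum_XSet_eq hx
        have h1 := phi_gen A0 x hxs t
        have h2 := phi_gen (Matrix.of fun i j => (starRingEnd ℂ) (A0 i j)) x hxs s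
        simp only [Matrix.of_apply] at h2
        have h2' : ∑ m' ∈ XSet n N, (Nat.multinomial Finset.univ m' : ℂ) *
              (starRingEnd ℂ) (phi A0 x m') * ∏ l, s l ^ m' l
            = ∏ i, (∑ l, (starRingEnd ℂ) (A0 i l) * s l) ^ x i := by
          simp only [conj_phi]; exact h2
        calc (Nat.multinomial Finset.univ x : ℂ) *
              ∏ i, (η1 i * ((∑ l, A0 i l * t l) * (∑ l, (starRingEnd ℂ) (A0 i l) * s l))) ^ x i
            = (Nat.multinomial Finset.univ x : ℂ) * ((∏ i, η1 i ^ x i) *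
                ((∏ i, (∑ l, A0 i l * t l) ^ x i) *
                 (∏ i, (∑ l, (starRingEnd ℂ) (A0 i l) * s l) ^ x i))) := by
              simp only [mul_pow, Finset.prod_mul_distrib]
          _ = (Nat.multinomial Finset.univ x : ℂ) * ((∏ i, η1 i ^ x i) *
                ((∑ m ∈ XSet n N, (Nat.multinomial Finset.univ m : ℂ) * phi A0 x m *
                    ∏ l, t l ^ m l) *
                 (∑ m' ∈ XSet n N, (Nat.multinomial Finset.univ m' : ℂ) *
                    (starRingEnd ℂ) (phi A0 x m') * ∏ l, s l ^ m' l))) := by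
              rw [h1, h2']
          _ = _ := by
              rw [Finset.sum_mul_sum]
              rw [Finset.mul_sum, Finset.mul_sum]
              refine Finset.sum_congr rfl fun m _ => ?_
              rw [Finset.mul_sum, Finset.mul_sum]
              refine Finset.sum_congr rfl fun m' _ => ?_
              ring
    _ = ∑ m ∈ XSet n N, ∑ m' ∈ XSet n N,
          ((Nat.multinomial Finset.univ m : ℂ) * ∏ l, t l ^ m l) *
            (((Nat.multinomial Finset.univ m' : ℂ) * ∏ l, s l ^ m' l) *
              (if m = m' then (∏ i, η2 i ^ m i) / (Nat.multinomial Finset.univ m : ℂ)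
                else 0)) := by
        rw [Finset.sum_comm]
        refine Finset.sum_congr rfl fun m hm => ?_
        rw [Finset.sum_comm]
        refine Finset.sum_congr rfl fun m' hm' => ?_
        rw [← Finset.mul_sum, ← Finset.mul_sum, horth m hm m' hm']
    _ = ∑ m ∈ XSet n N, (Nat.multinomial Finset.univ m : ℂ) *
          ∏ l, (η2 l * (t l * s l)) ^ m l := by
        refine Finset.sum_congr rfl fun m hm => ?_
        rw [Finset.sum_eq_single m]
        · rw [if_pos rfl]
          have hMne : (Nat.multinomial Finset.univ m : ℂ) ≠ 0 := mult_ne_zero m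
          field_simp
          simp only [mul_pow, Finset.prod_mul_distrib]
          ring
        · intro m' _ hne
          rw [if_neg (fun h => hne h.symm), mul_zero, mul_zero]
        · intro h; exact absurd hm h
    _ = (∑ l, η2 l * (t l * s l)) ^ N := sumXSet n N _

/-- Necessity: if the multivariate Krawtchouk polynomials satisfy the orthogonality
relation, then `A₀* D₁ A₀ = ζ D₂` for some `N`-th root of unity `ζ`. -/
theorem matrix_relation_of_krawtchouk_orthogonality
    (n N : ℕ) (hn : 2 ≤ n) (hN : 1 ≤ N)
    (A0 : Matrix (Fin n) (Fin n) ℂ)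
    (hrow : ∀ j, A0 ⟨0, by omega⟩ j = 1) (hcol : ∀ i, A0 i ⟨0, by omega⟩ = 1)
    (η1 η2 : Fin n → ℂ) (hη1 : ∀ i, η1 i ≠ 0) (hη2 : ∀ i, η2 i ≠ 0)
    (horth : ∀ m ∈ XSet n N, ∀ m' ∈ XSet n N,
      ∑ x ∈ XSet n N,
          (Nat.multinomial Finset.univ x : ℂ) * (∏ i, η1 i ^ x i) *
            phi A0 x m * (starRingEnd ℂ) (phi A0 x m')
        = if m = m' then (∏ i, η2 i ^ m i) / (Nat.multinomial Finset.univ m : ℂ)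
          else 0) :
    ∃ ζ : ℂ, ζ ^ N = 1 ∧
      A0.conjTranspose * Matrix.diagonal η1 * A0 = ζ • Matrix.diagonal η2 := by
  classical
  have hN0 : N ≠ 0 := by omega
  set S : Fin n → Fin n → ℂ :=
    fun j k => ∑ i, η1 i * (A0 i j * (starRingEnd ℂ) (A0 i k)) with hS
  -- single-point evaluation
  have hsingle : ∀ j k : Fin n, (S j k) ^ N = (if j = k then η2 j else 0) ^ N := by
    intro j k
    have hm := master A0 η1 η2 horth (fun l => if l = j then 1 else 0)
      (fun l => if l = k then 1 else 0)
    have hu : ∀ c : Fin n → ℂ, ∀ b : Fin n,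
        (∑ l, c l * (if l = b then (1:ℂ) else 0)) = c b := by
      intro c b
      simp [mul_ite, Finset.sum_ite_eq']
    simp only [hu] at hm
    have hr : (∑ l, η2 l * ((if l = j then (1:ℂ) else 0) * (if l = k then (1:ℂ) else 0)))
        = if j = k then η2 j else 0 := by
      rw [Finset.sum_congr rfl (g := fun l => if l = j then (if j = k then η2 j else 0) else 0)
        (fun l _ => by split_ifs <;> simp_all)]
      simp [Finset.sum_ite_eq']
    rw [hr] at hm
    exact hm
  have hS0 : ∀ j k : Fin n, j ≠ k → S j k = 0 := by
    intro j k hjk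
    have := hsingle j k
    rw [if_neg hjk, zero_pow hN0] at this
    exact pow_eq_zero_iff hN0 |>.mp this
  have hSd : ∀ j : Fin n, (S j j) ^ N = (η2 j) ^ N := by
    intro j; simpa using hsingle j j
  set z0 : Fin n := ⟨0, by omega⟩ with hz0
  set ζ : ℂ := S z0 z0 / η2 z0 with hζ
  have hζN : ζ ^ N = 1 := by
    rw [hζ, div_pow, hSd z0, div_self (pow_ne_zero _ (hη2 z0))]
  -- diagonal entries are proportional with the same constant
  have hdiag : ∀ j : Fin n, S j j = ζ * η2 j := by
    intro j
    by_cases hj : j = z0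
    · rw [hj, hζ, div_mul_cancel₀ _ (hη2 z0)]
    · obtain ⟨α, hα⟩ := IsAlgClosed.exists_pow_nat_eq (-(η2 z0)⁻¹) (two_pos)
      obtain ⟨β, hβ⟩ := IsAlgClosed.exists_pow_nat_eq ((η2 j)⁻¹) (two_pos)
      have hz0j : ¬ z0 = j := fun h => hj h.symm
      set t : Fin n → ℂ := fun l =>
        (if l = z0 then α else 0) + (if l = j then β else 0) with ht
      have hm := master A0 η1 η2 horth t t
      have hu : ∀ c : Fin n → ℂ, (∑ l, c l * t l) = c z0 * α + c j * β := by
        intro c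
        simp [ht, mul_add, mul_ite, Finset.sum_add_distrib, Finset.sum_ite_eq']
      simp only [hu] at hm
      have hexp : (∑ i, η1 i * ((A0 i z0 * α + A0 i j * β) *
            ((starRingEnd ℂ) (A0 i z0) * α + (starRingEnd ℂ) (A0 i j) * β)))
          = S z0 z0 * α ^ 2 + S z0 j * (α * β) + S j z0 * (β * α) + S j j * β ^ 2 := by
        rw [hS]
        simp only [Finset.sum_mul, ← Finset.sum_add_distrib]
        refine Finset.sum_congr rfl fun i _ => ?_
        ring
      have hkey : ∀ l, η2 l * (t l * t l)
          = (if l = z0 then η2 z0 * α ^ 2 else 0) + (if l = j then η2 j * β ^ 2 else 0) := by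
        intro l
        simp only [ht]
        split_ifs with h1 h2 h2
        · exact absurd (h1.symm.trans h2) hz0j
        · rw [h1]; ring
        · rw [h2]; ring
        · ring
      have hrr : (∑ l, η2 l * (t l * t l)) = η2 z0 * α ^ 2 + η2 j * β ^ 2 := by
        rw [Finset.sum_congr rfl fun l _ => hkey l]
        simp [Finset.sum_add_distrib, Finset.sum_ite_eq']
      have hr0 : η2 z0 * α ^ 2 + η2 j * β ^ 2 = 0 := by
        rw [hα, hβ, mul_neg, mul_inv_cancel₀ (hη2 z0), mul_inv_cancel₀ (hη2 j), neg_add_cancel]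
      rw [hexp, hS0 z0 j hz0j, hS0 j z0 hj, zero_mul, zero_mul, add_zero, add_zero,
        hrr, hr0, zero_pow hN0] at hm
      have hzero : S z0 z0 * α ^ 2 + S j j * β ^ 2 = 0 := pow_eq_zero_iff hN0 |>.mp hm
      rw [hα, hβ] at hzero
      have h2z : η2 z0 ≠ 0 := hη2 z0
      have h2j : η2 j ≠ 0 := hη2 j
      have hstep : S j j * (η2 j)⁻¹ = S z0 z0 * (η2 z0)⁻¹ := by
        linear_combination hzero
      calc S j j = (S j j * (η2 j)⁻¹) * η2 j := by field_simp
        _ = (S z0 z0 * (η2 z0)⁻¹) * η2 j := by rw [hstep]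
        _ = ζ * η2 j := by rw [hζ, div_eq_mul_inv]
  refine ⟨ζ, hζN, ?_⟩
  ext j k
  have hentry : (A0.conjTranspose * Matrix.diagonal η1 * A0) j k = S k j := by
    rw [hS, Matrix.mul_apply]
    refine Finset.sum_congr rfl fun i _ => ?_
    rw [Matrix.mul_diagonal, Matrix.conjTranspose_apply]
    simp only [RCLike.star_def]
    ring
  rw [hentry, Matrix.smul_apply, Matrix.diagonal_apply]
  by_cases hjk : j = k
  · subst hjk
    rw [if_pos rfl, hdiag j, smul_eq_mul]
  · rw [hS0 k j (fun h => hjk h.symm), if_neg hjk, smul_zero]
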